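/- For any invertible matrix A ∈ ℝ^{n×n}, the minimal max-norm of a perturbation E making A + E singular equals ‖A^{-1}‖_{∞→1}^{-1}; that is, γ_{n-1}(A) := min{‖E‖_max : rank(A+E) ≤ n−1} = ‖A^{-1}‖_{∞→1}^{-1}. -/

import Mathlib

/-- The entrywise maximum norm of a matrix. -/
noncomputable def maxNorm {n m : ℕ} (E : Matrix (Fin n) (Fin m) ℝ) : ℝ :=
  ⨆ i, ⨆ j, |E i j|

/-- The `∞ → 1` operator norm: `‖B‖_{∞→1} = sup_{x ≠ 0} ‖Bx‖₁ / ‖x‖_∞. -/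
noncomputable def normInfToOne {n m : ℕ} (B : Matrix (Fin n) (Fin m) ℝ) : ℝ :=
  ⨆ x : {x : Fin m → ℝ // x ≠ 0}, (∑ i, |B.mulVec x.1 i|) / (⨆ j, |x.1 j|)

/-- The approximation numbers: `γ_k(A) = min {‖E‖_max : rank (A + E) ≤ k}`. -/
noncomputable def gammaAp {n : ℕ} (A : Matrix (Fin n) (Fin n) ℝ) (k : ℕ) : ℝ :=
  sInf {c | ∃ E : Matrix (Fin n) (Fin n) ℝ, (A + E).rank ≤ k ∧ c = maxNorm E}

namespace GammaAux

open Matrix Finset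

variable {n : ℕ}

/-- `‖x‖_∞`. -/
noncomputable def supAbs (x : Fin n → ℝ) : ℝ := ⨆ j, |x j|

/-- `‖Bx‖₁`. -/
noncomputable def onorm (B : Matrix (Fin n) (Fin n) ℝ) (x : Fin n → ℝ) : ℝ :=
  ∑ i, |B.mulVec x i|

lemma abs_le_supAbs [Nonempty (Fin n)] (x : Fin n → ℝ) (j : Fin n) : |x j| ≤ supAbs x :=
  le_ciSup (f := fun j => |x j|) (Set.Finite.bddAbove (Set.finite_range _)) j

lemma supAbs_le [Nonempty (Fin n)] {x : Fin n → ℝ} {c : ℝ} (h : ∀ j, |x j| ≤ c) :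
    supAbs x ≤ c := ciSup_le h

lemma supAbs_pos [Nonempty (Fin n)] {x : Fin n → ℝ} (hx : x ≠ 0) : 0 < supAbs x := by
  obtain ⟨j, hj⟩ := Function.ne_iff.mp hx
  exact lt_of_lt_of_le (abs_pos.mpr hj) (abs_le_supAbs x j)

lemma onorm_nonneg (B : Matrix (Fin n) (Fin n) ℝ) (x : Fin n → ℝ) : 0 ≤ onorm B x :=
  Finset.sum_nonneg fun i _ => abs_nonneg _

lemma maxNorm_entry_le [Nonempty (Fin n)] (E : Matrix (Fin n) (Fin n) ℝ) (i j : Fin n) :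
    |E i j| ≤ maxNorm E := by
  refine le_trans ?_ (le_ciSup (f := fun i => ⨆ j, |E i j|)
    (Set.Finite.bddAbove (Set.finite_range _)) i)
  exact le_ciSup (f := fun j => |E i j|) (Set.Finite.bddAbove (Set.finite_range _)) j

lemma onorm_le (B : Matrix (Fin n) (Fin n) ℝ) [Nonempty (Fin n)] (x : Fin n → ℝ) :
    onorm B x ≤ (∑ i, ∑ j, |B i j|) * supAbs x := by
  rw [Finset.sum_mul]
  refine Finset.sum_le_sum fun i _ => ?_
  rw [Finset.sum_mul]
  calc |B.mulVec x i| ≤ ∑ j, |B i j * x j| := by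
        rw [Matrix.mulVec, dotProduct]; exact Finset.abs_sum_le_sum_abs _ _
    _ ≤ ∑ j, |B i j| * supAbs x := by
        refine Finset.sum_le_sum fun j _ => ?_
        rw [abs_mul]
        exact mul_le_mul_of_nonneg_left (abs_le_supAbs x j) (abs_nonneg _)

lemma quotient_le_normInfToOne [Nonempty (Fin n)] (B : Matrix (Fin n) (Fin n) ℝ)
    {x : Fin n → ℝ} (hx : x ≠ 0) :
    onorm B x / supAbs x ≤ normInfToOne B := by
  refine le_ciSup (f := fun x : {x : Fin n → ℝ // x ≠ 0} => onorm B x.1 / supAbs x.1)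
    ⟨∑ i, ∑ j, |B i j|, ?_⟩ ⟨x, hx⟩
  rintro c ⟨y, rfl⟩
  rw [div_le_iff₀ (supAbs_pos y.2)]
  exact onorm_le B y.1

lemma onorm_le_normInfToOne_mul [Nonempty (Fin n)] (B : Matrix (Fin n) (Fin n) ℝ)
    {x : Fin n → ℝ} (hx : x ≠ 0) :
    onorm B x ≤ normInfToOne B * supAbs x := by
  have h := quotient_le_normInfToOne B hx
  rw [div_le_iff₀ (supAbs_pos hx)] at h
  exact h

/-- One-coordinate convexity: pushing coordinate `a` to `±1` doesn't decrease `onorm`. -/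
lemma onorm_le_max_update (B : Matrix (Fin n) (Fin n) ℝ) (a : Fin n) (x : Fin n → ℝ)
    (h : |x a| ≤ 1) :
    onorm B x ≤ max (onorm B (Function.update x a 1)) (onorm B (Function.update x a (-1))) := by
  set θ : ℝ := (x a + 1) / 2 with hθdef
  have hx1 : -1 ≤ x a := (abs_le.mp h).1
  have hx2 : x a ≤ 1 := (abs_le.mp h).2
  have hθ0 : 0 ≤ θ := by rw [hθdef]; linarith
  have hθ1 : θ ≤ 1 := by rw [hθdef]; linarith
  have key : ∀ c : ℝ, ∀ i, B.mulVec (Function.update x a c) i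
      = B i a * c + ∑ j ∈ Finset.univ \ {a}, B i j * x j := by
    intro c i
    rw [Matrix.mulVec, dotProduct]
    have : (fun j => B i j * Function.update x a c j)
        = Function.update (fun j => B i j * x j) a (B i a * c) := by
      funext j
      rcases eq_or_ne j a with rfl | hne
      · simp
      · simp [Function.update_of_ne hne]
    rw [this, Finset.sum_update_of_mem (Finset.mem_univ a)]
  have keyx : ∀ i, B.mulVec x i = B i a * x a + ∑ j ∈ Finset.univ \ {a}, B i j * x j := by
    intro i
    have := key (x a) i
    rwa [Function.update_eq_self] at this
  have step : onorm B x ≤ θ * onorm B (Function.update x a 1)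
      + (1 - θ) * onorm B (Function.update x a (-1)) := by
    unfold onorm
    rw [Finset.mul_sum, Finset.mul_sum, ← Finset.sum_add_distrib]
    refine Finset.sum_le_sum fun i _ => ?_
    rw [keyx i, key 1 i, key (-1) i]
    set r : ℝ := ∑ j ∈ Finset.univ \ {a}, B i j * x j
    have hxa : x a = 2 * θ - 1 := by rw [hθdef]; ring
    have e1 : B i a * x a + r = θ * (B i a * 1 + r) + (1 - θ) * (B i a * (-1) + r) := by
      rw [hxa]; ring
    rw [e1]
    calc |θ * (B i a * 1 + r) + (1 - θ) * (B i a * (-1) + r)|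
        ≤ |θ * (B i a * 1 + r)| + |(1 - θ) * (B i a * (-1) + r)| := abs_add_le _ _
      _ = θ * |B i a * 1 + r| + (1 - θ) * |B i a * (-1) + r| := by
          rw [abs_mul, abs_mul, abs_of_nonneg hθ0, abs_of_nonneg (show (0:ℝ) ≤ 1 - θ by linarith)]
  refine step.trans ?_
  rcases le_total (onorm B (Function.update x a 1)) (onorm B (Function.update x a (-1))) with hc | hc
  · rw [max_eq_right hc]; nlinarith
  · rw [max_eq_left hc]; nlinarith

/-- On the cube, `onorm` is dominated by its value at some sign vector. -/
lemma exists_sign_ge (B : Matrix (Fin n) (Fin n) ℝ) (x : Fin n → ℝ) (hx : ∀ j, |x j| ≤ 1) :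
    ∃ s : Fin n → ℝ, (∀ j, s j = 1 ∨ s j = -1) ∧ onorm B x ≤ onorm B s := by
  suffices h : ∀ S : Finset (Fin n), ∀ x : Fin n → ℝ, (∀ j, |x j| ≤ 1) →
      (∀ j, j ∉ S → x j = 1 ∨ x j = -1) →
      ∃ s : Fin n → ℝ, (∀ j, s j = 1 ∨ s j = -1) ∧ onorm B x ≤ onorm B s by
    exact h Finset.univ x hx (fun j hj => absurd (Finset.mem_univ j) hj)
  intro S
  induction S using Finset.induction_on with
  | empty =>
    intro x hx h
    exact ⟨x, fun j => h j (Finset.notMem_empty j), le_refl _⟩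
  | @insert a S' ha IH =>
    intro x hx h
    have hbound : ∀ c : ℝ, c = 1 ∨ c = -1 → ∀ j, |Function.update x a c j| ≤ 1 := by
      intro c hc j
      rcases eq_or_ne j a with rfl | hne
      · rcases hc with rfl | rfl <;> simp
      · rw [Function.update_of_ne hne]; exact hx j
    have hcoord : ∀ c : ℝ, c = 1 ∨ c = -1 → ∀ j, j ∉ S' →
        Function.update x a c j = 1 ∨ Function.update x a c j = -1 := by
      intro c hc j hj
      rcases eq_or_ne j a with rfl | hne
      · simpa using hc
      · rw [Function.update_of_ne hne]
        exact h j (by simp [Finset.mem_insert, hne, hj])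
    have hmax := onorm_le_max_update B a x (hx a)
    rcases le_max_iff.mp hmax with hc | hc
    · obtain ⟨s, hs1, hs2⟩ := IH (Function.update x a 1)
        (hbound 1 (Or.inl rfl)) (hcoord 1 (Or.inl rfl))
      exact ⟨s, hs1, hc.trans hs2⟩
    · obtain ⟨s, hs1, hs2⟩ := IH (Function.update x a (-1))
        (hbound (-1) (Or.inr rfl)) (hcoord (-1) (Or.inr rfl))
      exact ⟨s, hs1, hc.trans hs2⟩

/-- There is a sign vector achieving (at least) the norm. -/
lemma exists_sign_norm [Nonempty (Fin n)] (B : Matrix (Fin n) (Fin n) ℝ) :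
    ∃ s : Fin n → ℝ, (∀ j, s j = 1 ∨ s j = -1) ∧ normInfToOne B ≤ onorm B s := by
  classical
  set V : Finset (Fin n → ℝ) :=
    (Finset.univ : Finset (Fin n → Bool)).image
      (fun ε => fun j => if ε j then (1 : ℝ) else -1) with hV
  have hVne : V.Nonempty := Finset.Nonempty.image ⟨fun _ => true, Finset.mem_univ _⟩ _
  obtain ⟨s₀, hs₀V, hs₀max⟩ := Finset.exists_max_image V (onorm B) hVne
  have hsign : ∀ v ∈ V, ∀ j, v j = 1 ∨ v j = -1 := by
    intro v hv j
    rw [hV, Finset.mem_image] at hv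
    obtain ⟨ε, _, rfl⟩ := hv
    by_cases hε : ε j <;> simp [hε]
  have hmemV : ∀ s : Fin n → ℝ, (∀ j, s j = 1 ∨ s j = -1) → s ∈ V := by
    intro s hs
    rw [hV, Finset.mem_image]
    refine ⟨fun j => decide (s j = 1), Finset.mem_univ _, ?_⟩
    funext j
    rcases hs j with h1 | h1
    · simp [h1]
    · norm_num [h1]
  refine ⟨s₀, hsign s₀ hs₀V, ?_⟩
  haveI : Nonempty {x : Fin n → ℝ // x ≠ 0} :=
    ⟨⟨fun _ => 1, by intro h; simpa using congrFun h (Classical.arbitrary _)⟩⟩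
  refine ciSup_le fun x => ?_
  obtain ⟨x, hx⟩ := x
  show onorm B x / supAbs x ≤ onorm B s₀
  rw [div_le_iff₀ (supAbs_pos hx)]
  -- normalize
  set σ := supAbs x with hσ
  have hσpos : 0 < σ := supAbs_pos hx
  set y : Fin n → ℝ := σ⁻¹ • x with hy
  have hy1 : ∀ j, |y j| ≤ 1 := by
    intro j
    rw [hy]
    simp only [Pi.smul_apply, smul_eq_mul, abs_mul, abs_of_pos (inv_pos.mpr hσpos)]
    rw [inv_mul_le_iff₀ hσpos, mul_one]
    exact abs_le_supAbs x j
  obtain ⟨s, hs1, hs2⟩ := exists_sign_ge B y hy1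
  have hyx : onorm B y = σ⁻¹ * onorm B x := by
    unfold onorm
    rw [Finset.mul_sum]
    refine Finset.sum_congr rfl fun i _ => ?_
    rw [hy, Matrix.mulVec_smul]
    simp [abs_mul, abs_of_pos (inv_pos.mpr hσpos)]
  have h1 : σ⁻¹ * onorm B x ≤ onorm B s₀ := by
    rw [← hyx]
    exact hs2.trans (hs₀max s (hmemV s hs1))
  calc onorm B x = σ * (σ⁻¹ * onorm B x) := by field_simp
    _ ≤ σ * onorm B s₀ := mul_le_mul_of_nonneg_left h1 hσpos.le
    _ = onorm B s₀ * σ := mul_comm _ _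

lemma rank_le_of_singular {M : Matrix (Fin n) (Fin n) ℝ} (hn : 0 < n)
    (h : ∃ v ≠ 0, M.mulVec v = 0) : M.rank ≤ n - 1 := by
  obtain ⟨v, hv, hMv⟩ := h
  have hker : 0 < Module.finrank ℝ (LinearMap.ker M.mulVecLin) := by
    rw [Module.finrank_pos_iff]
    refine ⟨⟨⟨v, ?_⟩, 0, ?_⟩⟩
    · rw [LinearMap.mem_ker, Matrix.mulVecLin_apply, hMv]
    · simp [Submodule.mk_eq_zero, hv]
  have hrn : M.rank + Module.finrank ℝ (LinearMap.ker M.mulVecLin) = n := by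
    rw [Matrix.rank]
    rw [LinearMap.finrank_range_add_finrank_ker M.mulVecLin]
    simp [Module.finrank_pi]
  omega

end GammaAux

open Matrix GammaAux in
/-- For an invertible `A`, the minimal max-norm of a perturbation making `A`
singular equals `‖A⁻¹‖_{∞→1}⁻¹`: `γ_{n-1}(A) = ‖A⁻¹‖_{∞→1}⁻¹`. -/
theorem gamma_eq_inv_normInfToOne {n : ℕ} (A : Matrix (Fin n) (Fin n) ℝ)
    (hA : IsUnit A.det) :
    gammaAp A (n - 1) = (normInfToOne A⁻¹)⁻¹ := by
  classical
  rcases Nat.eq_zero_or_pos n with rfl | hn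
  · -- n = 0
    have hE : ∀ E : Matrix (Fin 0) (Fin 0) ℝ, maxNorm E = 0 := by
      intro E; unfold maxNorm; exact Real.iSup_of_isEmpty _
    have hset : {c | ∃ E : Matrix (Fin 0) (Fin 0) ℝ, (A + E).rank ≤ 0 - 1 ∧ c = maxNorm E}
        = {0} := by
      ext c
      simp only [Set.mem_setOf_eq, Set.mem_singleton_iff]
      constructor
      · rintro ⟨E, _, rfl⟩; exact hE E
      · rintro rfl
        exact ⟨0, by simpa using (A + 0).rank_le_card_width, (hE 0).symm⟩
    have hrhs : normInfToOne A⁻¹ = 0 := by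
      unfold normInfToOne
      haveI : IsEmpty {x : Fin 0 → ℝ // x ≠ 0} :=
        ⟨fun ⟨x, hx⟩ => hx (funext fun i => i.elim0)⟩
      exact Real.iSup_of_isEmpty _
    unfold gammaAp
    rw [hset, csInf_singleton, hrhs, _root_.inv_zero]
  · haveI : Nonempty (Fin n) := Fin.pos_iff_nonempty.mp hn
    set B := A⁻¹ with hB
    set M := normInfToOne B with hM
    have hBA : B * A = 1 := Matrix.nonsing_inv_mul A hA
    have hAB : A * B = 1 := Matrix.mul_nonsing_inv A hA
    have hBinj : ∀ v : Fin n → ℝ, B.mulVec v = 0 → v = 0 := by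
      intro v hv
      have : A.mulVec (B.mulVec v) = A.mulVec 0 := by rw [hv]
      rwa [Matrix.mulVec_mulVec, hAB, Matrix.one_mulVec, Matrix.mulVec_zero] at this
    -- M > 0
    have hMpos : 0 < M := by
      set x : Fin n → ℝ := fun _ => 1 with hx
      have hxne : x ≠ 0 := by
        intro h
        have := congrFun h (Classical.arbitrary (Fin n))
        simp [hx] at this
      have hBx : B.mulVec x ≠ 0 := fun h => hxne (hBinj x h)
      obtain ⟨i, hi⟩ := Function.ne_iff.mp hBx
      have h1 : 0 < onorm B x := by
        unfold onorm
        exact lt_of_lt_of_le (abs_pos.mpr hi)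
          (Finset.single_le_sum (f := fun i => |B.mulVec x i|)
            (fun i _ => abs_nonneg _) (Finset.mem_univ i))
      have h2 := quotient_le_normInfToOne B hxne
      exact lt_of_lt_of_le (div_pos h1 (supAbs_pos hxne)) h2
    -- lower bound: any admissible perturbation has maxNorm ≥ M⁻¹
    have lower : ∀ E : Matrix (Fin n) (Fin n) ℝ, (A + E).rank ≤ n - 1 → M⁻¹ ≤ maxNorm E := by
      intro E hrank
      have hdet : (A + E).det = 0 := by
        by_contra hd
        have : (A + E).rank = n := by
          rw [Matrix.rank_of_isUnit _ ((A + E).isUnit_iff_isUnit_det.mpr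
            (isUnit_iff_ne_zero.mpr hd)), Fintype.card_fin]
        omega
      obtain ⟨x, hx, hxeq⟩ := (Matrix.exists_mulVec_eq_zero_iff).mpr hdet
      have hxE : x = -(B.mulVec (E.mulVec x)) := by
        have h1 : A.mulVec x + E.mulVec x = 0 := by
          rw [← Matrix.add_mulVec, hxeq]
        have h2 : A.mulVec x = -(E.mulVec x) := by linear_combination (norm := module) h1
        calc x = B.mulVec (A.mulVec x) := by
              rw [Matrix.mulVec_mulVec, hBA, Matrix.one_mulVec]
          _ = -(B.mulVec (E.mulVec x)) := by rw [h2, Matrix.mulVec_neg]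
      set w : Fin n → ℝ := E.mulVec x with hw
      have hwne : w ≠ 0 := by
        intro h
        rw [h, Matrix.mulVec_zero, neg_zero] at hxE
        exact hx hxE
      set L : ℝ := ∑ j, |x j| with hL
      have hLpos : 0 < L := by
        obtain ⟨j, hj⟩ := Function.ne_iff.mp hx
        rw [hL]
        exact lt_of_lt_of_le (abs_pos.mpr hj)
          (Finset.single_le_sum (f := fun k => |x k|)
            (fun i _ => abs_nonneg _) (Finset.mem_univ j))
      -- L ≤ onorm B w
      have hL1 : L ≤ onorm B w := by
        rw [hL]
        refine Finset.sum_le_sum fun j _ => ?_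
        have : x j = -(B.mulVec w j) := by rw [hxE]; simp
        rw [this, abs_neg]
      -- supAbs w ≤ maxNorm E * L
      have hw1 : supAbs w ≤ maxNorm E * L := by
        refine supAbs_le fun j => ?_
        rw [hw]
        calc |E.mulVec x j| ≤ ∑ k, |E j k * x k| := by
              rw [Matrix.mulVec, dotProduct]; exact Finset.abs_sum_le_sum_abs _ _
          _ ≤ ∑ k, maxNorm E * |x k| := by
              refine Finset.sum_le_sum fun k _ => ?_
              rw [abs_mul]
              exact mul_le_mul_of_nonneg_right (maxNorm_entry_le E j k) (abs_nonneg _)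
          _ = maxNorm E * L := by rw [hL, Finset.mul_sum]
      have hchain : L ≤ M * (maxNorm E * L) :=
        hL1.trans ((onorm_le_normInfToOne_mul B hwne).trans
          (mul_le_mul_of_nonneg_left hw1 hMpos.le))
      have h1M : 1 ≤ M * maxNorm E := by
        nlinarith
      rw [inv_le_iff_one_le_mul₀' hMpos]
      exact h1M
    -- upper bound: explicit rank-one perturbation
    obtain ⟨s, hs, hsM⟩ := exists_sign_norm B
    set μ : ℝ := onorm B s with hμ
    have hμpos : 0 < μ := lt_of_lt_of_le hMpos hsM
    set y : Fin n → ℝ := B.mulVec s with hy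
    have hsne : s ≠ 0 := by
      intro h
      have := congrFun h (Classical.arbitrary (Fin n))
      rcases hs (Classical.arbitrary (Fin n)) with h1 | h1 <;> rw [h1] at this <;> norm_num at this
    have hyne : y ≠ 0 := fun h => hsne (hBinj s h)
    set t : Fin n → ℝ := fun i => if y i < 0 then -1 else 1 with ht
    have hty : ∀ i, t i * y i = |y i| := by
      intro i
      rw [ht]
      rcases lt_or_ge (y i) 0 with h1 | h1
      · simp [h1, abs_of_neg h1]
      · simp [not_lt.mpr h1, abs_of_nonneg h1]
    set E : Matrix (Fin n) (Fin n) ℝ := fun j i => -μ⁻¹ * s j * t i with hE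
    have hEy : E.mulVec y = -s := by
      funext j
      rw [Matrix.mulVec, dotProduct]
      have : ∀ i, E j i * y i = -μ⁻¹ * s j * (t i * y i) := by
        intro i; rw [hE]; ring
      rw [Finset.sum_congr rfl fun i _ => this i, ← Finset.mul_sum]
      have hsum : ∑ i, t i * y i = μ := by
        rw [hμ]
        exact Finset.sum_congr rfl fun i _ => hty i
      rw [hsum]
      field_simp
      rfl
    have hrank : (A + E).rank ≤ n - 1 := by
      refine rank_le_of_singular hn ⟨y, hyne, ?_⟩
      rw [Matrix.add_mulVec, hEy]
      have : A.mulVec y = s := by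
        rw [hy, Matrix.mulVec_mulVec, hAB, Matrix.one_mulVec]
      rw [this]
      simp
    have hmaxE : maxNorm E = μ⁻¹ := by
      have habs : ∀ j i, |E j i| = μ⁻¹ := by
        intro j i
        rw [hE]
        have h1 : |s j| = 1 := by rcases hs j with h | h <;> simp [h]
        have h2 : |t i| = 1 := by
          rw [ht]; rcases lt_or_ge (y i) 0 with h | h <;> simp [h, not_lt.mpr]
        simp only [abs_mul, h1, h2, abs_neg, abs_inv, abs_of_pos hμpos]
        ring
      unfold maxNorm
      have : ∀ j : Fin n, (⨆ i, |E j i|) = μ⁻¹ := by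
        intro j
        simp only [habs]
        exact ciSup_const
      simp only [this]
      exact ciSup_const
    -- conclude
    refine le_antisymm ?_ ?_
    · calc gammaAp A (n - 1) ≤ maxNorm E := by
            refine csInf_le ⟨M⁻¹, ?_⟩ ⟨E, hrank, rfl⟩
            rintro c ⟨F, hF, rfl⟩
            exact lower F hF
        _ = μ⁻¹ := hmaxE
        _ ≤ M⁻¹ := by
            apply inv_anti₀ hMpos hsM
    · refine le_csInf ⟨maxNorm E, E, hrank, rfl⟩ ?_
      rintro c ⟨F, hF, rfl⟩
      exact lower F hF
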